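/- Prefix filtering overlap-threshold correctness: if |r ∩ s| ≥ t for an integer t ≥ 1, then the prefixes of length |r| − t + 1 and |s| − t + 1 intersect, i.e., r[:|r| − t + 1] ∩ s[:|s| − t + 1] ≠ ∅, where prefixes are taken with respect to a common linear order on elements. -/

import Mathlib

open scoped Classical

/-- `r[:k]`: the set of the `k` smallest elements of `r` under the linear order. -/
noncomputable def prefixSet {α : Type*} [LinearOrder α] (r : Finset α) (k : ℕ) : Finset α :=
  ((r.sort (· ≤ ·)).take k).toFinset

lemma mem_prefixSet_of_card_lt {α : Type*} [LinearOrder α] {r : Finset α} {k : ℕ} {x : α}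
    (hx : x ∈ r) (hc : (r.filter (· < x)).card < k) : x ∈ prefixSet r k := by
  classical
  set l := r.sort (· ≤ ·) with hl
  have hmem : x ∈ l := (Finset.mem_sort _).2 hx
  have hslt : l.SortedLT := Finset.sortedLT_sort r
  obtain ⟨i, hi, hxi⟩ := List.getElem_of_mem hmem
  have hsub : (l.take i).toFinset ⊆ r.filter (· < x) := by
    intro y hy
    rw [List.mem_toFinset] at hy
    obtain ⟨j, hj, hyj⟩ := List.getElem_of_mem hy
    have hj' : j < i := lt_of_lt_of_le hj (by simp [List.length_take])
    rw [List.getElem_take] at hyj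
    have hyr : y ∈ r := by
      rw [← hyj]
      exact (Finset.mem_sort _).1 (List.getElem_mem _)
    have hylt : y < x := by
      rw [← hyj, ← hxi]
      exact hslt.getElem_lt_getElem_of_lt hj'
    exact Finset.mem_filter.2 ⟨hyr, hylt⟩
  have hnd : (l.take i).Nodup := (Finset.sort_nodup r _).sublist (List.take_sublist _ _)
  have hcard : i ≤ (r.filter (· < x)).card := by
    have h1 : (l.take i).toFinset.card = i := by
      rw [List.toFinset_card_of_nodup hnd, List.length_take]
      exact min_eq_left hi.le
    rw [← h1]
    exact Finset.card_le_card hsub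
  have hik : i < k := lt_of_le_of_lt hcard hc
  have hlen : i < (l.take k).length := by
    rw [List.length_take]; exact lt_min hik hi
  have : (l.take k)[i]'hlen = x := by rw [List.getElem_take]; exact hxi
  unfold prefixSet
  rw [List.mem_toFinset, ← this]
  exact List.getElem_mem _

theorem prefix_filtering_correct {α : Type*} [LinearOrder α]
    (r s : Finset α) (t : ℕ) (ht : 1 ≤ t) (h : t ≤ (r ∩ s).card) :
    (prefixSet r (r.card - t + 1) ∩ prefixSet s (s.card - t + 1)).Nonempty := by
  classical
  have hne : (r ∩ s).Nonempty := Finset.card_pos.1 (lt_of_lt_of_le ht h)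
  set m := (r ∩ s).min' hne with hm
  have hmr : m ∈ r := Finset.mem_of_mem_inter_left ((r ∩ s).min'_mem hne)
  have hms : m ∈ s := Finset.mem_of_mem_inter_right ((r ∩ s).min'_mem hne)
  have key : ∀ (u : Finset α), (r ∩ s) ⊆ u → t ≤ u.card →
      (u.filter (· < m)).card < u.card - t + 1 := by
    intro u hsub htu
    have hdisj : u.filter (· < m) ⊆ u \ (r ∩ s) := by
      intro y hy
      rw [Finset.mem_filter] at hy
      refine Finset.mem_sdiff.2 ⟨hy.1, fun hin => ?_⟩
      exact absurd ((r ∩ s).min'_le y hin) (not_le.2 hy.2)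
    have h1 : (u.filter (· < m)).card ≤ u.card - (r ∩ s).card := by
      have := Finset.card_le_card hdisj
      rwa [Finset.card_sdiff_of_subset hsub] at this
    calc (u.filter (· < m)).card ≤ u.card - (r ∩ s).card := h1
      _ ≤ u.card - t := Nat.sub_le_sub_left h u.card
      _ < u.card - t + 1 := Nat.lt_succ_self _
  have h1 : m ∈ prefixSet r (r.card - t + 1) :=
    mem_prefixSet_of_card_lt hmr
      (key r Finset.inter_subset_left (h.trans (Finset.card_le_card Finset.inter_subset_left)))
  have h2 : m ∈ prefixSet s (s.card - t + 1) :=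
    mem_prefixSet_of_card_lt hms
      (key s Finset.inter_subset_right (h.trans (Finset.card_le_card Finset.inter_subset_right)))
  exact ⟨m, Finset.mem_inter.2 ⟨h1, h2⟩⟩
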